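/- arXiv:1110.1751 — 2 statements merged into one kernel-verified Lean document; each statement's English description precedes it below -/
import Mathlib

section
/- Let A be an m×m row-stochastic matrix and π a stochastic vector with all entries bounded below by p* > 0, satisfying π^T A = π^T. Then A is balanced with coefficient α = p*/(1 − (m−1)p*): for every nonempty proper S ⊂ [m], A_{SS̄} ≥ (p*/(1 − (m−1)p*))·A_{S̄S}. -/
open Finset Matrix

theorem stmt_6 (m : ℕ) (A : Matrix (Fin m) (Fin m) ℝ)
    (hnonneg : ∀ i j, 0 ≤ A i j) (hrow : ∀ i, ∑ j, A i j = 1)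
    (π : Fin m → ℝ) (hπsum : ∑ i, π i = 1)
    (p : ℝ) (hp : 0 < p) (hπp : ∀ i, p ≤ π i)
    (hpm : ((m : ℝ) - 1) * p < 1)
    (hπA : Matrix.vecMul π A = π) :
    ∀ S : Finset (Fin m), S.Nonempty → S ≠ Finset.univ →
      (p / (1 - ((m : ℝ) - 1) * p)) * ∑ i ∈ Sᶜ, ∑ j ∈ S, A i j ≤
        ∑ i ∈ S, ∑ j ∈ Sᶜ, A i j := by
  intro S hS hSne
  obtain ⟨i0, _⟩ := hS
  have hm : 1 ≤ m := i0.pos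
  set c : ℝ := 1 - ((m : ℝ) - 1) * p with hc
  have hc0 : 0 < c := by simp [hc]; linarith
  -- each π i ≤ c
  have hπub : ∀ i, π i ≤ c := by
    intro i
    have h1 : π i + ∑ j ∈ ({i} : Finset (Fin m))ᶜ, π j = 1 := by
      rw [← hπsum, ← Finset.sum_compl_add_sum ({i} : Finset (Fin m)) π,
        Finset.sum_singleton]
      ring
    have hcard : ((({i} : Finset (Fin m))ᶜ).card : ℝ) = (m : ℝ) - 1 := by
      rw [Finset.card_compl, Finset.card_singleton]
      simp [Nat.cast_sub hm]
    have h2 : ((m : ℝ) - 1) * p ≤ ∑ j ∈ ({i} : Finset (Fin m))ᶜ, π j := by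
      calc ((m : ℝ) - 1) * p = ((({i} : Finset (Fin m))ᶜ).card : ℝ) * p := by
            rw [hcard]
        _ = ∑ _j ∈ ({i} : Finset (Fin m))ᶜ, p := by
            rw [Finset.sum_const, nsmul_eq_mul]
        _ ≤ _ := Finset.sum_le_sum fun j _ => hπp j
    simp only [hc]; linarith
  -- flow balance
  have hA : ∀ i, ∑ j ∈ S, π i * A i j + ∑ j ∈ Sᶜ, π i * A i j = π i := by
    intro i
    rw [← Finset.mul_sum, ← Finset.mul_sum, ← mul_add, add_comm,
      Finset.sum_compl_add_sum, hrow, mul_one]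
  have hB : ∀ j, ∑ i ∈ S, π i * A i j + ∑ i ∈ Sᶜ, π i * A i j = π j := by
    intro j
    have := congrFun hπA j
    simp only [Matrix.vecMul, dotProduct] at this
    rw [add_comm, Finset.sum_compl_add_sum]
    exact this
  have hAS : ∑ i ∈ S, (∑ j ∈ S, π i * A i j + ∑ j ∈ Sᶜ, π i * A i j) = ∑ i ∈ S, π i :=
    Finset.sum_congr rfl fun i _ => hA i
  have hBS : ∑ j ∈ S, (∑ i ∈ S, π i * A i j + ∑ i ∈ Sᶜ, π i * A i j) = ∑ j ∈ S, π j :=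
    Finset.sum_congr rfl fun j _ => hB j
  rw [Finset.sum_add_distrib] at hAS hBS
  have hcomm1 : ∑ j ∈ S, ∑ i ∈ S, π i * A i j = ∑ i ∈ S, ∑ j ∈ S, π i * A i j :=
    Finset.sum_comm
  have hcomm2 : ∑ j ∈ S, ∑ i ∈ Sᶜ, π i * A i j = ∑ i ∈ Sᶜ, ∑ j ∈ S, π i * A i j :=
    Finset.sum_comm
  have key : ∑ i ∈ S, ∑ j ∈ Sᶜ, π i * A i j = ∑ i ∈ Sᶜ, ∑ j ∈ S, π i * A i j := by
    rw [hcomm1, hcomm2] at hBS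
    linarith
  -- inequalities
  have h1 : ∑ i ∈ S, ∑ j ∈ Sᶜ, π i * A i j ≤ c * ∑ i ∈ S, ∑ j ∈ Sᶜ, A i j := by
    rw [Finset.mul_sum]
    refine Finset.sum_le_sum fun i _ => ?_
    rw [Finset.mul_sum]
    exact Finset.sum_le_sum fun j _ =>
      mul_le_mul_of_nonneg_right (hπub i) (hnonneg i j)
  have h2 : p * ∑ i ∈ Sᶜ, ∑ j ∈ S, A i j ≤ ∑ i ∈ Sᶜ, ∑ j ∈ S, π i * A i j := by
    rw [Finset.mul_sum]
    refine Finset.sum_le_sum fun i _ => ?_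
    rw [Finset.mul_sum]
    exact Finset.sum_le_sum fun j _ =>
      mul_le_mul_of_nonneg_right (hπp i) (hnonneg i j)
  rw [div_mul_eq_mul_div, div_le_iff₀ hc0]
  calc p * ∑ i ∈ Sᶜ, ∑ j ∈ S, A i j ≤ ∑ i ∈ Sᶜ, ∑ j ∈ S, π i * A i j := h2
    _ = ∑ i ∈ S, ∑ j ∈ Sᶜ, π i * A i j := key.symm
    _ ≤ c * ∑ i ∈ S, ∑ j ∈ Sᶜ, A i j := h1
    _ = (∑ i ∈ S, ∑ j ∈ Sᶜ, A i j) * c := mul_comm _ _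
end

section
/- Let A be an m×m row-stochastic matrix, π, σ stochastic vectors with σ^T A = π^T, and suppose σ_i ≥ p* > 0 for all i. Then with V(x) = Σ_i π_i x_i² − (π^T x)² and V'(y) = Σ_i σ_i y_i² − (σ^T y)², one has for y = Ax: V(x) − V'(y) ≥ p*·Σ_{i<j} (A^T A)_{ij}·(x_i − x_j)². -/
open Finset Matrix

lemma pair_sum (m : ℕ) (f : Fin m → Fin m → ℝ) (hsym : ∀ i j, f i j = f j i)
    (hdiag : ∀ i, f i i = 0) :
    ∑ i, ∑ j, f i j = 2 * ∑ i, ∑ j ∈ Finset.univ.filter (fun j => i < j), f i j := by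
  have hswap : ∑ i, ∑ j ∈ Finset.univ.filter (fun j => j < i), f i j
      = ∑ i, ∑ j ∈ Finset.univ.filter (fun j => i < j), f i j := by
    calc ∑ i, ∑ j ∈ Finset.univ.filter (fun j => j < i), f i j
        = ∑ i, ∑ j, if j < i then f i j else 0 := by
          simp [Finset.sum_filter]
      _ = ∑ j, ∑ i, if j < i then f i j else 0 := Finset.sum_comm
      _ = ∑ i, ∑ j ∈ Finset.univ.filter (fun j => i < j), f i j := by
          simp only [Finset.sum_filter]
          exact Finset.sum_congr rfl fun i _ => Finset.sum_congr rfl fun j _ => by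
            by_cases h : i < j <;> simp [h, hsym]
  have hsplit : ∀ i : Fin m, ∑ j, f i j =
      (∑ j ∈ Finset.univ.filter (fun j => i < j), f i j)
      + (∑ j ∈ Finset.univ.filter (fun j => j < i), f i j) := by
    intro i
    rw [← Finset.sum_filter_add_sum_filter_not Finset.univ (fun j => i < j) (f i)]
    congr 1
    have hset : Finset.univ.filter (fun j => ¬ i < j)
        = insert i (Finset.univ.filter (fun j : Fin m => j < i)) := by
      ext j
      simp [not_lt, le_iff_lt_or_eq, or_comm, eq_comm]
    rw [hset, Finset.sum_insert (by simp), hdiag]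
    ring
  calc ∑ i, ∑ j, f i j
      = (∑ i, ∑ j ∈ Finset.univ.filter (fun j => i < j), f i j)
        + ∑ i, ∑ j ∈ Finset.univ.filter (fun j => j < i), f i j := by
        rw [← Finset.sum_add_distrib]; exact Finset.sum_congr rfl fun i _ => hsplit i
    _ = 2 * ∑ i, ∑ j ∈ Finset.univ.filter (fun j => i < j), f i j := by
        rw [hswap]; ring

lemma variance_pairs (m : ℕ) (w x : Fin m → ℝ) (hw : ∑ i, w i = 1) :
    (∑ i, w i * x i ^ 2) - (∑ i, w i * x i) ^ 2
      = ∑ i, ∑ j ∈ Finset.univ.filter (fun j => i < j), w i * w j * (x i - x j) ^ 2 := by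
  have expand : ∑ i, ∑ j, w i * w j * (x i - x j) ^ 2
      = 2 * ((∑ i, w i * x i ^ 2) - (∑ i, w i * x i) ^ 2) := by
    have h1 : ∀ i j : Fin m, w i * w j * (x i - x j) ^ 2
        = (w i * x i ^ 2) * w j + w i * (w j * x j ^ 2)
          - 2 * ((w i * x i) * (w j * x j)) := by intro i j; ring
    simp only [h1, Finset.sum_sub_distrib, Finset.sum_add_distrib, ← Finset.mul_sum,
      ← Finset.sum_mul, hw]
    ring
  have := pair_sum m (fun i j => w i * w j * (x i - x j) ^ 2)
    (fun i j => by ring) (fun i => by ring)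
  rw [expand] at this
  linarith


theorem stmt_16 (m : ℕ) (A : Matrix (Fin m) (Fin m) ℝ)
    (hnonneg : ∀ i j, 0 ≤ A i j) (hrow : ∀ i, ∑ j, A i j = 1)
    (π σ : Fin m → ℝ)
    (hπnonneg : ∀ i, 0 ≤ π i) (hπsum : ∑ i, π i = 1)
    (hσsum : ∑ i, σ i = 1)
    (p : ℝ) (hp : 0 < p) (hσp : ∀ i, p ≤ σ i)
    (hσA : Matrix.vecMul σ A = π)
    (x : Fin m → ℝ) :
    p * ∑ i, ∑ j ∈ Finset.univ.filter (fun j => i < j),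
        (Aᵀ * A) i j * (x i - x j) ^ 2 ≤
      ((∑ i, π i * x i ^ 2) - (π ⬝ᵥ x) ^ 2) -
        ((∑ i, σ i * (A.mulVec x i) ^ 2) - (σ ⬝ᵥ A.mulVec x) ^ 2) := by
  -- dot products agree
  have hdot : π ⬝ᵥ x = σ ⬝ᵥ A.mulVec x := by
    rw [Matrix.dotProduct_mulVec, hσA]
  -- second moments
  have hπi : ∀ i, π i = ∑ k, σ k * A k i := by
    intro i; rw [← hσA]; simp [Matrix.vecMul, dotProduct]
  have hmom : ∑ i, π i * x i ^ 2 = ∑ k, σ k * ∑ i, A k i * x i ^ 2 := by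
    simp only [hπi, Finset.sum_mul, Finset.mul_sum]
    rw [Finset.sum_comm]
    exact Finset.sum_congr rfl fun k _ => Finset.sum_congr rfl fun i _ => by ring
  have hy : ∀ k, A.mulVec x k = ∑ i, A k i * x i := by
    intro k; simp [Matrix.mulVec, dotProduct]
  -- rewrite RHS
  have hRHS : ((∑ i, π i * x i ^ 2) - (π ⬝ᵥ x) ^ 2) -
        ((∑ i, σ i * (A.mulVec x i) ^ 2) - (σ ⬝ᵥ A.mulVec x) ^ 2)
      = ∑ k, σ k * ((∑ i, A k i * x i ^ 2) - (∑ i, A k i * x i) ^ 2) := by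
    rw [hdot, hmom]
    have : ∀ k, σ k * ((∑ i, A k i * x i ^ 2) - (∑ i, A k i * x i) ^ 2)
        = σ k * (∑ i, A k i * x i ^ 2) - σ k * (A.mulVec x k) ^ 2 := by
      intro k; rw [hy]; ring
    simp only [this, Finset.sum_sub_distrib]
    ring
  rw [hRHS]
  -- per-row variance identity
  have hvar : ∀ k, (∑ i, A k i * x i ^ 2) - (∑ i, A k i * x i) ^ 2
      = ∑ i, ∑ j ∈ Finset.univ.filter (fun j => i < j), A k i * A k j * (x i - x j) ^ 2 :=
    fun k => variance_pairs m (A k) x (hrow k)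
  simp only [hvar]
  -- lower bound σ by p
  have hstep : ∀ k, p * ∑ i, ∑ j ∈ Finset.univ.filter (fun j => i < j),
        A k i * A k j * (x i - x j) ^ 2
      ≤ σ k * ∑ i, ∑ j ∈ Finset.univ.filter (fun j => i < j),
        A k i * A k j * (x i - x j) ^ 2 := by
    intro k
    apply mul_le_mul_of_nonneg_right (hσp k)
    apply Finset.sum_nonneg; intro i _
    apply Finset.sum_nonneg; intro j _
    exact mul_nonneg (mul_nonneg (hnonneg k i) (hnonneg k j)) (sq_nonneg _)
  calc p * ∑ i, ∑ j ∈ Finset.univ.filter (fun j => i < j),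
        (Aᵀ * A) i j * (x i - x j) ^ 2
      = ∑ k, p * ∑ i, ∑ j ∈ Finset.univ.filter (fun j => i < j),
          A k i * A k j * (x i - x j) ^ 2 := by
        rw [← Finset.mul_sum]
        congr 1
        rw [Finset.sum_comm]
        refine Finset.sum_congr rfl fun i _ => ?_
        rw [Finset.sum_comm]
        refine Finset.sum_congr rfl fun j _ => ?_
        simp [Matrix.mul_apply, Matrix.transpose_apply, Finset.sum_mul]
    _ ≤ ∑ k, σ k * ∑ i, ∑ j ∈ Finset.univ.filter (fun j => i < j),
          A k i * A k j * (x i - x j) ^ 2 := Finset.sum_le_sum fun k _ => hstep k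
end
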